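/- For every 1 ≤ k < l ≤ n and every pair of indices i, j with 1 ≤ i, j ≤ l, the polynomial identity Δ'_{l;l−k}·{x_{ij}, Δ_{l;k}} = Δ_{l;k}·{x_{ij}, Δ'_{l;l−k}} holds in R_n (equivalently, {x_{ij}, Δ_{l;k}/Δ'_{l;l−k}} = 0 in the fraction field). -/

import Mathlib

open MvPolynomial

/-- The quadratic Poisson bracket on the polynomial algebra of the matrix affine
Poisson space `M_{m,n}`. -/
noncomputable def pois {m n : ℕ} (f g : MvPolynomial (Fin m × Fin n) ℂ) :
    MvPolynomial (Fin m × Fin n) ℂ :=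
  ∑ i : Fin m, ∑ k : Fin m, ∑ j : Fin n, ∑ l : Fin n,
    (((k : ℤ) - (i : ℤ)).sign + ((l : ℤ) - (j : ℤ)).sign) •
      (X (i, l) * X (k, j) * pderiv (i, j) f * pderiv (k, l) g)

/-- The minor `Δ_{I,J}` (equal to `0` by convention if `|I| ≠ |J|`). -/
noncomputable def Delta {m n : ℕ} (I : Finset (Fin m)) (J : Finset (Fin n)) :
    MvPolynomial (Fin m × Fin n) ℂ :=
  if h : J.card = I.card then
    Matrix.det (Matrix.of fun a b : Fin I.card =>
      X ((I.orderIsoOfFin rfl a).1, (J.orderIsoOfFin h b).1))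
  else 0

/-- The coordinate ring `R_n = ℂ[x_{ij}]` of `M_n`. -/
abbrev Rn (n : ℕ) := MvPolynomial (Fin n × Fin n) ℂ

/-- The field of rational functions `F_n = ℂ(M_n)`. -/
abbrev Fn (n : ℕ) := FractionRing (Rn n)

/-- The interval `[a,b]` (in 1-based indexing) inside `{1,…,n}`, as a finset of `Fin n`. -/
def iv (n a b : ℕ) : Finset (Fin n) :=
  Finset.univ.filter fun i => a ≤ (i : ℕ) + 1 ∧ (i : ℕ) + 1 ≤ b

/-- `Δ_{l;k}`: the upper-right `k×k` minor of the principal `l×l` submatrix. -/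
noncomputable def Dul (n l k : ℕ) : Rn n := Delta (iv n 1 k) (iv n (l - k + 1) l)

/-- `Δ'_{l;k}`: the lower-left `k×k` minor of the principal `l×l` submatrix. -/
noncomputable def Dll (n l k : ℕ) : Rn n := Delta (iv n (l - k + 1) l) (iv n 1 k)

/-- `Δ_l`: the principal `l×l` minor. -/
noncomputable def Dpr (n l : ℕ) : Rn n := Delta (iv n 1 l) (iv n 1 l)

/-- The extension of the quadratic Poisson bracket to the field of rational functions,
determined by `{P/Q, S/T} = ({P,S}QT − {P,T}QS − {Q,S}PT + {Q,T}PS)/(Q²T²)`. -/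
noncomputable def poisF (n : ℕ) (f g : Fn n) : Fn n :=
  let φ := algebraMap (Rn n) (Fn n)
  let P := (IsLocalization.sec (nonZeroDivisors (Rn n)) f).1
  let Q := ((IsLocalization.sec (nonZeroDivisors (Rn n)) f).2 : Rn n)
  let S := (IsLocalization.sec (nonZeroDivisors (Rn n)) g).1
  let T := ((IsLocalization.sec (nonZeroDivisors (Rn n)) g).2 : Rn n)
  (φ (pois P S) * φ Q * φ T - φ (pois P T) * φ Q * φ S
    - φ (pois Q S) * φ P * φ T + φ (pois Q T) * φ P * φ S)
    / (φ Q ^ 2 * φ T ^ 2)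


lemma pderiv_finset_prod {σ α : Type*} [DecidableEq σ] [DecidableEq α] (v : σ) (s : Finset α)
    (f : α → MvPolynomial σ ℂ) :
    pderiv v (∏ a ∈ s, f a) = ∑ a ∈ s, pderiv v (f a) * ∏ b ∈ s.erase a, f b := by
  induction s using Finset.induction_on with
  | empty => simp
  | @insert a s ha ih =>
    rw [Finset.prod_insert ha, pderiv_mul, ih, Finset.sum_insert ha, Finset.erase_insert ha,
      Finset.mul_sum]
    congr 1
    apply Finset.sum_congr rfl
    intro b hb
    have hba : a ≠ b := by rintro rfl; exact ha hb
    rw [Finset.erase_insert_of_ne hba,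
      Finset.prod_insert (fun h => ha (Finset.mem_of_mem_erase h))]
    ring

lemma pderiv_det {σ : Type*} [DecidableEq σ] (v : σ) {m : ℕ}
    (M : Matrix (Fin m) (Fin m) (MvPolynomial σ ℂ)) :
    pderiv v M.det = ∑ p : Fin m, (M.updateCol p (fun q => pderiv v (M q p))).det := by
  rw [Matrix.det_apply, map_sum]
  have step1 : ∀ σ' : Equiv.Perm (Fin m),
      pderiv v (Equiv.Perm.sign σ' • ∏ q : Fin m, M (σ' q) q)
        = ∑ p : Fin m, Equiv.Perm.sign σ' •
            (pderiv v (M (σ' p) p) * ∏ q ∈ Finset.univ.erase p, M (σ' q) q) := by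
    intro σ'
    simp only [Units.smul_def]
    rw [map_zsmul, pderiv_finset_prod, Finset.smul_sum]
  rw [Finset.sum_congr rfl (fun σ' _ => step1 σ'), Finset.sum_comm]
  apply Finset.sum_congr rfl
  intro p _
  rw [Matrix.det_apply]
  apply Finset.sum_congr rfl
  intro σ' _
  congr 1
  rw [← Finset.mul_prod_erase Finset.univ _ (Finset.mem_univ p)]
  congr 1
  · simp [Matrix.updateCol_apply]
  · apply Finset.prod_congr rfl
    intro q hq
    rw [Matrix.updateCol_apply, if_neg (Finset.ne_of_mem_erase hq)]

lemma pois_X_left {n : ℕ} (i j : Fin n) (g : MvPolynomial (Fin n × Fin n) ℂ) :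
    pois (X (i, j)) g = ∑ a : Fin n, ∑ b : Fin n,
      (((a : ℤ) - (i : ℤ)).sign + ((b : ℤ) - (j : ℤ)).sign) •
        (X (i, b) * X (a, j) * pderiv (a, b) g) := by
  unfold pois
  rw [Finset.sum_eq_single i]
  · apply Finset.sum_congr rfl
    intro a _
    rw [Finset.sum_eq_single j]
    · apply Finset.sum_congr rfl
      intro b _
      rw [pderiv_X_self]
      ring_nf
    · intro j' _ hj'
      apply Finset.sum_eq_zero
      intro b _
      rw [pderiv_X_of_ne (by simp [Ne, Prod.ext_iff, hj'.symm] : ((i,j) : Fin n × Fin n) ≠ (i, j'))]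
      simp
    · simp
  · intro i' _ hi'
    apply Finset.sum_eq_zero; intro a _
    apply Finset.sum_eq_zero; intro b _
    apply Finset.sum_eq_zero; intro c _
    rw [pderiv_X_of_ne (by simp only [Ne, Prod.ext_iff, not_and]; intro h; exact absurd h.symm hi' : ((i,j) : Fin n × Fin n) ≠ (i', b))]
    simp
  · simp

section MatrixLemmas
open Matrix
variable {R : Type*} [CommRing R] {m : ℕ}

lemma det_updateCol_single (M : Matrix (Fin m) (Fin m) R) (p q : Fin m) :
    (M.updateCol p (Pi.single q 1)).det = (M.updateRow q (Pi.single p 1)).det := by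
  rw [← Matrix.cramer_apply, ← Matrix.adjugate_apply]
  have h1 : Matrix.cramer M (Pi.single q 1) p = Matrix.adjugate Mᵀ q p := by
    rw [Matrix.adjugate_def]
    simp [Matrix.transpose_transpose]
  rw [h1, ← Matrix.adjugate_transpose, Matrix.transpose_apply]

lemma cramer_single_sum (M : Matrix (Fin m) (Fin m) R) (v : Fin m → R) (p : Fin m) :
    ∑ q, v q * (M.updateCol p (Pi.single q 1)).det = (M.updateCol p v).det := by
  simp_rw [← Matrix.cramer_apply]
  have h2 : ∀ q : Fin m, v q * Matrix.cramer M (Pi.single q 1) p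
      = Matrix.cramer M (v q • (Pi.single q 1 : Fin m → R)) p := by
    intro q; rw [_root_.map_smul]; simp
  simp_rw [h2, ← Finset.sum_apply, ← map_sum]
  have h3 : (∑ q, v q • (Pi.single q 1 : Fin m → R)) = v := by
    ext x; simp [Pi.single_apply]
  rw [h3]

lemma row_single_sum (M : Matrix (Fin m) (Fin m) R) (u : Fin m → R) (q : Fin m) :
    ∑ p, u p * (M.updateCol p (Pi.single q 1)).det = (M.updateRow q u).det := by
  have h : ∀ p, (M.updateCol p (Pi.single q 1)).det
      = (Mᵀ.updateCol q (Pi.single p 1)).det := by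
    intro p
    rw [det_updateCol_single, ← Matrix.det_transpose (M.updateRow q (Pi.single p 1)),
      ← Matrix.updateCol_transpose]
  simp_rw [h, cramer_single_sum Mᵀ u q, Matrix.updateCol_transpose, Matrix.det_transpose]

lemma colsum_eval_mem (M : Matrix (Fin m) (Fin m) R) (v : Fin m → R) (q₀ : Fin m) :
    ∑ p, M q₀ p * (M.updateCol p v).det = M.det * v q₀ := by
  have := congrFun (Matrix.mulVec_cramer M v) q₀
  simp only [Matrix.mulVec, dotProduct, Pi.smul_apply, smul_eq_mul] at this
  simp_rw [← Matrix.cramer_apply]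
  exact this

lemma rowsum_eval_mem (M : Matrix (Fin m) (Fin m) R) (u : Fin m → R) (p₀ : Fin m) :
    ∑ q, M q p₀ * (M.updateRow q u).det = M.det * u p₀ := by
  have := congrFun (Matrix.mulVec_cramer Mᵀ u) p₀
  simp only [Matrix.mulVec, dotProduct, Pi.smul_apply, smul_eq_mul,
    Matrix.det_transpose] at this
  simp_rw [← Matrix.cramer_transpose_apply]
  simpa using this

lemma cross_identity (M : Matrix (Fin m) (Fin m) R) (u v : Fin m → R) :
    ∑ p, u p * (M.updateCol p v).det = ∑ q, v q * (M.updateRow q u).det := by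
  have l1 : ∑ p, u p * (M.updateCol p v).det = u ⬝ᵥ (M.adjugate *ᵥ v) := by
    simp_rw [← Matrix.cramer_apply, ← Matrix.cramer_eq_adjugate_mulVec]
    rfl
  have l2 : ∑ q, v q * (M.updateRow q u).det = v ⬝ᵥ (Mᵀ.adjugate *ᵥ u) := by
    simp_rw [← Matrix.cramer_transpose_apply, ← Matrix.cramer_eq_adjugate_mulVec]
    rfl
  rw [l1, l2, ← Matrix.adjugate_transpose, Matrix.dotProduct_mulVec,
    ← Matrix.mulVec_transpose, dotProduct_comm]

end MatrixLemmas

section Central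
variable {n m : ℕ}

noncomputable abbrev Mgen (r c : Fin m → Fin n) :
    Matrix (Fin m) (Fin m) (MvPolynomial (Fin n × Fin n) ℂ) :=
  Matrix.of fun a b : Fin m => X (r a, c b)

lemma pois_X_det (i j : Fin n) (r c : Fin m → Fin n)
    (hr : Function.Injective r) :
    pois (X (i, j)) (Mgen r c).det
      = (∑ q : Fin m, ((r q : ℤ) - (i : ℤ)).sign • (X (r q, j) *
          ((Mgen r c).updateRow q (fun p => X (i, c p))).det))
      + ∑ p : Fin m, ((c p : ℤ) - (j : ℤ)).sign • (X (i, c p) *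
          ((Mgen r c).updateCol p (fun q => X (r q, j))).det) := by
  set M := Mgen r c with hM
  have hMe : ∀ a b, M a b = X (r a, c b) := fun a b => rfl
  have L1 : pois (X (i, j)) M.det = ∑ a : Fin n, ∑ b : Fin n, ∑ p : Fin m,
      (((a : ℤ) - (i : ℤ)).sign + ((b : ℤ) - (j : ℤ)).sign) •
        (X (i, b) * X (a, j) * (M.updateCol p fun q => pderiv (a, b) (M q p)).det) := by
    rw [pois_X_left]
    refine Finset.sum_congr rfl fun a _ => Finset.sum_congr rfl fun b _ => ?_
    rw [pderiv_det (a, b) M, Finset.mul_sum, Finset.smul_sum]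
  have L2 : (∑ a : Fin n, ∑ b : Fin n, ∑ p : Fin m,
      (((a : ℤ) - (i : ℤ)).sign + ((b : ℤ) - (j : ℤ)).sign) •
        (X (i, b) * X (a, j) * (M.updateCol p fun q => pderiv (a, b) (M q p)).det))
      = ∑ a : Fin n, ∑ p : Fin m,
      (((a : ℤ) - (i : ℤ)).sign + ((c p : ℤ) - (j : ℤ)).sign) •
        (X (i, c p) * X (a, j) * (M.updateCol p fun q => pderiv (a, c p) (M q p)).det) := by
    refine Finset.sum_congr rfl fun a _ => ?_
    rw [Finset.sum_comm]
    refine Finset.sum_congr rfl fun p _ => ?_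
    have h0 : ∀ b ∈ Finset.univ, b ≠ c p →
        (((a : ℤ) - (i : ℤ)).sign + ((b : ℤ) - (j : ℤ)).sign) •
          (X (i, b) * X (a, j) * (M.updateCol p fun q => pderiv (a, b) (M q p)).det)
          = 0 := by
      intro b _ hb
      have hdet : (M.updateCol p fun q => pderiv (a, b) (M q p)).det = 0 := by
        apply Matrix.det_eq_zero_of_column_eq_zero p
        intro q
        rw [Matrix.updateCol_self, hMe]
        refine pderiv_X_of_ne ?_
        simp only [Ne, Prod.ext_iff, not_and]
        exact fun _ h => hb h.symm
      rw [hdet, mul_zero, smul_zero]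
    have h1 : c p ∉ Finset.univ →
        (((a : ℤ) - (i : ℤ)).sign + ((c p : ℤ) - (j : ℤ)).sign) •
          (X (i, c p) * X (a, j) *
            (M.updateCol p fun q => pderiv (a, c p) (M q p)).det) = 0 :=
      fun h => absurd (Finset.mem_univ _) h
    rw [Finset.sum_eq_single (c p) h0 h1]
  have L3 : (∑ a : Fin n, ∑ p : Fin m,
      (((a : ℤ) - (i : ℤ)).sign + ((c p : ℤ) - (j : ℤ)).sign) •
        (X (i, c p) * X (a, j) * (M.updateCol p fun q => pderiv (a, c p) (M q p)).det))
      = ∑ p : Fin m, ∑ q : Fin m,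
      (((r q : ℤ) - (i : ℤ)).sign + ((c p : ℤ) - (j : ℤ)).sign) •
        (X (i, c p) * X (r q, j) * (M.updateCol p (Pi.single q 1)).det) := by
    rw [Finset.sum_comm]
    refine Finset.sum_congr rfl fun p _ => ?_
    have hz : ∀ a ∈ Finset.univ, a ∉ Finset.univ.image r →
        (((a : ℤ) - (i : ℤ)).sign + ((c p : ℤ) - (j : ℤ)).sign) •
          (X (i, c p) * X (a, j) * (M.updateCol p fun q => pderiv (a, c p) (M q p)).det)
          = 0 := by
      intro a _ ha
      have hdet : (M.updateCol p fun q => pderiv (a, c p) (M q p)).det = 0 := by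
        apply Matrix.det_eq_zero_of_column_eq_zero p
        intro q
        rw [Matrix.updateCol_self, hMe]
        refine pderiv_X_of_ne ?_
        simp only [Ne, Prod.ext_iff, not_and]
        exact fun h _ => ha (Finset.mem_image.mpr ⟨q, Finset.mem_univ q, h⟩)
      rw [hdet, mul_zero, smul_zero]
    rw [← Finset.sum_subset (Finset.subset_univ (Finset.univ.image r)) hz,
      Finset.sum_image (fun x _ y _ h => hr h)]
    refine Finset.sum_congr rfl fun q _ => ?_
    have harg : (fun q' => pderiv (r q, c p) (M q' p)) = (Pi.single q 1 : Fin m → _) := by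
      funext q'
      rw [hMe, Pi.single_apply]
      by_cases h : q' = q
      · subst h; rw [if_pos rfl, pderiv_X_self]
      · rw [if_neg h]
        refine pderiv_X_of_ne ?_
        simp only [Ne, Prod.ext_iff, not_and]
        exact fun hrr _ => h (hr hrr)
    rw [harg]
  rw [L1, L2, L3]
  simp_rw [add_smul]
  rw [Finset.sum_congr rfl (fun p (_ : p ∈ Finset.univ) => Finset.sum_add_distrib)]
  rw [Finset.sum_add_distrib]
  congr 1
  · rw [Finset.sum_comm]
    refine Finset.sum_congr rfl fun q _ => ?_
    rw [← row_single_sum M (fun p => X (i, c p)) q, Finset.mul_sum, Finset.smul_sum]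
    refine Finset.sum_congr rfl fun p _ => ?_
    congr 1
    ring
  · refine Finset.sum_congr rfl fun p _ => ?_
    rw [← cramer_single_sum M (fun q => X (r q, j)) p, Finset.mul_sum, Finset.smul_sum]
    refine Finset.sum_congr rfl fun q _ => ?_
    congr 1
    ring
end Central

section Eval
variable {n m : ℕ}

lemma RS_mem (i j : Fin n) (r c : Fin m → Fin n) (q₀ : Fin m) (h : r q₀ = i) :
    ∑ q : Fin m, ((r q : ℤ) - (i : ℤ)).sign • (X (r q, j) *
        ((Mgen r c).updateRow q (fun p => X (i, c p))).det) = 0 := by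
  apply Finset.sum_eq_zero
  intro q _
  by_cases hq : q = q₀
  · subst hq
    rw [h, sub_self, Int.sign_zero, zero_smul]
  · have hdet : ((Mgen r c).updateRow q fun p => X (i, c p)).det = 0 := by
      apply Matrix.det_zero_of_row_eq hq
      rw [Matrix.updateRow_self, Matrix.updateRow_ne (Ne.symm hq)]
      funext p
      rw [← h]
      rfl
    rw [hdet, mul_zero, smul_zero]

lemma CS_mem (i j : Fin n) (r c : Fin m → Fin n) (p₀ : Fin m) (h : c p₀ = j) :
    ∑ p : Fin m, ((c p : ℤ) - (j : ℤ)).sign • (X (i, c p) *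
        ((Mgen r c).updateCol p (fun q => X (r q, j))).det) = 0 := by
  apply Finset.sum_eq_zero
  intro p _
  by_cases hp : p = p₀
  · subst hp
    rw [h, sub_self, Int.sign_zero, zero_smul]
  · have hdet : ((Mgen r c).updateCol p fun q => X (r q, j)).det = 0 := by
      apply Matrix.det_zero_of_column_eq hp
      intro q
      rw [Matrix.updateCol_self, Matrix.updateCol_ne (Ne.symm hp)]
      rw [← h]
      rfl
    rw [hdet, mul_zero, smul_zero]

lemma CS_eval (i j : Fin n) (r c : Fin m → Fin n) (q₀ : Fin m) (h : r q₀ = i)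
    (s : ℤ) (hs : ∀ p, ((c p : ℤ) - (j : ℤ)).sign = s) :
    ∑ p : Fin m, ((c p : ℤ) - (j : ℤ)).sign • (X (i, c p) *
        ((Mgen r c).updateCol p (fun q => X (r q, j))).det)
      = s • ((Mgen r c).det * X (i, j)) := by
  simp_rw [hs, ← Finset.smul_sum]
  congr 1
  have h1 : ∀ p, (X (i, c p) : MvPolynomial (Fin n × Fin n) ℂ) = Mgen r c q₀ p := by
    intro p; rw [← h]; rfl
  simp_rw [h1]
  rw [colsum_eval_mem (Mgen r c) (fun q => X (r q, j)) q₀, h]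

lemma RS_eval (i j : Fin n) (r c : Fin m → Fin n) (p₀ : Fin m) (h : c p₀ = j)
    (s : ℤ) (hs : ∀ q, ((r q : ℤ) - (i : ℤ)).sign = s) :
    ∑ q : Fin m, ((r q : ℤ) - (i : ℤ)).sign • (X (r q, j) *
        ((Mgen r c).updateRow q (fun p => X (i, c p))).det)
      = s • ((Mgen r c).det * X (i, j)) := by
  simp_rw [hs, ← Finset.smul_sum]
  congr 1
  have h1 : ∀ q, (X (r q, j) : MvPolynomial (Fin n × Fin n) ℂ) = Mgen r c q p₀ := by
    intro q; rw [← h]; rfl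
  simp_rw [h1]
  rw [rowsum_eval_mem (Mgen r c) (fun p => X (i, c p)) p₀, h]

lemma RS_CS_cancel (i j : Fin n) (r c : Fin m → Fin n) (s : ℤ)
    (hsr : ∀ q, ((r q : ℤ) - (i : ℤ)).sign = s)
    (hsc : ∀ p, ((c p : ℤ) - (j : ℤ)).sign = -s) :
    (∑ q : Fin m, ((r q : ℤ) - (i : ℤ)).sign • (X (r q, j) *
        ((Mgen r c).updateRow q (fun p => X (i, c p))).det))
      + (∑ p : Fin m, ((c p : ℤ) - (j : ℤ)).sign • (X (i, c p) *
          ((Mgen r c).updateCol p (fun q => X (r q, j))).det)) = 0 := by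
  simp_rw [hsr, hsc, ← Finset.smul_sum]
  have hT := cross_identity (Mgen r c) (fun p => X (i, c p)) (fun q => X (r q, j))
  rw [← hT, neg_smul, add_neg_eq_zero]

end Eval

lemma mem_iv {n a b : ℕ} {x : Fin n} : x ∈ iv n a b ↔ a ≤ (x : ℕ) + 1 ∧ (x : ℕ) + 1 ≤ b := by
  simp [iv]

lemma iv_card (n a b : ℕ) (hb : b ≤ n) : (iv n (a + 1) b).card = b - a := by
  rw [← Nat.card_Ico a b]
  apply Finset.card_bij (fun (x : Fin n) _ => (x : ℕ))
  · intro x hx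
    rw [mem_iv] at hx
    rw [Finset.mem_Ico]
    omega
  · intro x _ y _ hxy
    exact Fin.ext hxy
  · intro y hy
    rw [Finset.mem_Ico] at hy
    exact ⟨⟨y, by omega⟩, by rw [mem_iv]; constructor <;> simp <;> omega, rfl⟩

lemma Delta_eq {n : ℕ} (I J : Finset (Fin n)) (h : J.card = I.card) :
    Delta I J = (Mgen (fun a => ((I.orderIsoOfFin rfl) a : Fin n))
      (fun b => ((J.orderIsoOfFin h) b : Fin n))).det := by
  rw [Delta, dif_pos h]

/-- **Case 1 of the Gelfand–Zeitlin flow computation:** for `i, j` in the principal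
`l×l` block, `{x_{ij}, Δ_{l;k}/Δ'_{l;l−k}} = 0`, i.e. as a polynomial identity
`Δ'_{l;l−k}·{x_{ij}, Δ_{l;k}} = Δ_{l;k}·{x_{ij}, Δ'_{l;l−k}}`. -/
theorem GZ_bracket_principal_block (n k l : ℕ) (hk : 1 ≤ k) (hkl : k < l) (hln : l ≤ n)
    (i j : Fin n) (hi : (i : ℕ) + 1 ≤ l) (hj : (j : ℕ) + 1 ≤ l) :
    Dll n l (l - k) * pois (X (i, j)) (Dul n l k)
      = Dul n l k * pois (X (i, j)) (Dll n l (l - k)) := by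
  have hkn : k ≤ n := le_trans hkl.le hln
  have hlkn : l - k ≤ n := le_trans (Nat.sub_le l k) hln
  have hI1 : (iv n 1 k).card = k := by simpa using iv_card n 0 k hkn
  have hJ1 : (iv n (l - k + 1) l).card = k := by
    rw [iv_card n (l - k) l hln, Nat.sub_sub_self hkl.le]
  have hI2 : (iv n (k + 1) l).card = l - k := iv_card n k l hln
  have hJ2 : (iv n 1 (l - k)).card = l - k := by simpa using iv_card n 0 (l - k) hlkn
  have hc1 : (iv n (l - k + 1) l).card = (iv n 1 k).card := by rw [hI1, hJ1]
  have hc2 : (iv n 1 (l - k)).card = (iv n (k + 1) l).card := by rw [hI2, hJ2]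
  have hDul : Dul n l k = Delta (iv n 1 k) (iv n (l - k + 1) l) := rfl
  have hDll : Dll n l (l - k) = Delta (iv n (k + 1) l) (iv n 1 (l - k)) := by
    rw [Dll, Nat.sub_sub_self hkl.le]
  rw [hDul, hDll, Delta_eq _ _ hc1, Delta_eq _ _ hc2]
  set r₁ : Fin (iv n 1 k).card → Fin n :=
    fun a => (((iv n 1 k).orderIsoOfFin rfl) a : Fin n) with hr₁def
  set c₁ : Fin (iv n 1 k).card → Fin n :=
    fun b => (((iv n (l - k + 1) l).orderIsoOfFin hc1) b : Fin n) with hc₁def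
  set r₂ : Fin (iv n (k + 1) l).card → Fin n :=
    fun a => (((iv n (k + 1) l).orderIsoOfFin rfl) a : Fin n) with hr₂def
  set c₂ : Fin (iv n (k + 1) l).card → Fin n :=
    fun b => (((iv n 1 (l - k)).orderIsoOfFin hc2) b : Fin n) with hc₂def
  have hr₁inj : Function.Injective r₁ :=
    fun x y hxy => ((iv n 1 k).orderIsoOfFin rfl).injective (Subtype.ext hxy)
  have hr₂inj : Function.Injective r₂ :=
    fun x y hxy => ((iv n (k + 1) l).orderIsoOfFin rfl).injective (Subtype.ext hxy)
  rw [pois_X_det i j r₁ c₁ hr₁inj, pois_X_det i j r₂ c₂ hr₂inj]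
  have hr₁lt : ∀ q, (r₁ q : ℕ) < k := fun q => by
    have h := (((iv n 1 k).orderIsoOfFin rfl) q).2
    rw [mem_iv] at h; simp only [hr₁def, hc₁def, hr₂def, hc₂def]; omega
  have hc₁ge : ∀ p, l - k ≤ (c₁ p : ℕ) := fun p => by
    have h := (((iv n (l - k + 1) l).orderIsoOfFin hc1) p).2
    rw [mem_iv] at h; simp only [hr₁def, hc₁def, hr₂def, hc₂def]; omega
  have hr₂ge : ∀ q, k ≤ (r₂ q : ℕ) := fun q => by
    have h := (((iv n (k + 1) l).orderIsoOfFin rfl) q).2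
    rw [mem_iv] at h; simp only [hr₁def, hc₁def, hr₂def, hc₂def]; omega
  have hc₂lt : ∀ p, (c₂ p : ℕ) < l - k := fun p => by
    have h := (((iv n 1 (l - k)).orderIsoOfFin hc2) p).2
    rw [mem_iv] at h; simp only [hr₁def, hc₁def, hr₂def, hc₂def]; omega
  have sgnneg : ∀ x y : Fin n, (x : ℕ) < (y : ℕ) → ((x : ℤ) - (y : ℤ)).sign = -1 := by
    intro x y h
    have hz : ((x : ℤ) - (y : ℤ)) < 0 := by push_cast; omega
    rcases hzz : ((x : ℤ) - (y : ℤ)) with a | a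
    · rw [hzz] at hz; exact absurd hz (not_lt.mpr (Int.ofNat_nonneg a))
    · rfl
  have sgnpos : ∀ x y : Fin n, (y : ℕ) < (x : ℕ) → ((x : ℤ) - (y : ℤ)).sign = 1 := by
    intro x y h
    exact Int.sign_eq_one_iff_pos.mpr (by push_cast; omega)
  by_cases hik : (i : ℕ) < k
  · -- i in rows of Dul
    have him : i ∈ iv n 1 k := mem_iv.mpr ⟨by omega, by omega⟩
    set q₀ := ((iv n 1 k).orderIsoOfFin rfl).symm ⟨i, him⟩ with hq₀def
    have hq₀ : r₁ q₀ = i :=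
      congrArg Subtype.val (((iv n 1 k).orderIsoOfFin rfl).apply_symm_apply ⟨i, him⟩)
    by_cases hjk : (j : ℕ) < l - k
    · -- Case A
      have hjm : j ∈ iv n 1 (l - k) := mem_iv.mpr ⟨by omega, by omega⟩
      set p₀ := ((iv n 1 (l - k)).orderIsoOfFin hc2).symm ⟨j, hjm⟩ with hp₀def
      have hp₀ : c₂ p₀ = j :=
        congrArg Subtype.val (((iv n 1 (l - k)).orderIsoOfFin hc2).apply_symm_apply ⟨j, hjm⟩)
      rw [RS_mem i j r₁ c₁ q₀ hq₀,
        CS_eval i j r₁ c₁ q₀ hq₀ 1 (fun p => sgnpos _ _ (lt_of_lt_of_le hjk (hc₁ge p))),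
        RS_eval i j r₂ c₂ p₀ hp₀ 1 (fun q => sgnpos _ _ (lt_of_lt_of_le hik (hr₂ge q))),
        CS_mem i j r₂ c₂ p₀ hp₀]
      simp only [one_smul, zero_add, add_zero]
      ring
    · -- Case B
      have hjm : j ∈ iv n (l - k + 1) l := mem_iv.mpr ⟨by omega, by omega⟩
      set p₁ := ((iv n (l - k + 1) l).orderIsoOfFin hc1).symm ⟨j, hjm⟩ with hp₁def
      have hp₁ : c₁ p₁ = j := congrArg Subtype.val
        (((iv n (l - k + 1) l).orderIsoOfFin hc1).apply_symm_apply ⟨j, hjm⟩)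
      rw [RS_mem i j r₁ c₁ q₀ hq₀, CS_mem i j r₁ c₁ p₁ hp₁,
        RS_CS_cancel i j r₂ c₂ 1 (fun q => sgnpos _ _ (lt_of_lt_of_le hik (hr₂ge q)))
          (fun p => by rw [sgnneg _ _ (by have := hc₂lt p; omega)])]
      simp
  · -- i in rows of Dll
    have him : i ∈ iv n (k + 1) l := mem_iv.mpr ⟨by omega, by omega⟩
    set q₂ := ((iv n (k + 1) l).orderIsoOfFin rfl).symm ⟨i, him⟩ with hq₂def
    have hq₂ : r₂ q₂ = i :=
      congrArg Subtype.val (((iv n (k + 1) l).orderIsoOfFin rfl).apply_symm_apply ⟨i, him⟩)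
    by_cases hjk : (j : ℕ) < l - k
    · -- Case C
      have hjm : j ∈ iv n 1 (l - k) := mem_iv.mpr ⟨by omega, by omega⟩
      set p₀ := ((iv n 1 (l - k)).orderIsoOfFin hc2).symm ⟨j, hjm⟩ with hp₀def
      have hp₀ : c₂ p₀ = j :=
        congrArg Subtype.val (((iv n 1 (l - k)).orderIsoOfFin hc2).apply_symm_apply ⟨j, hjm⟩)
      rw [RS_mem i j r₂ c₂ q₂ hq₂, CS_mem i j r₂ c₂ p₀ hp₀,
        RS_CS_cancel i j r₁ c₁ (-1) (fun q => sgnneg _ _ (lt_of_lt_of_le (hr₁lt q) (by omega)))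
          (fun p => by rw [sgnpos _ _ (lt_of_lt_of_le hjk (hc₁ge p))]; norm_num)]
      simp
    · -- Case D
      have hjm : j ∈ iv n (l - k + 1) l := mem_iv.mpr ⟨by omega, by omega⟩
      set p₁ := ((iv n (l - k + 1) l).orderIsoOfFin hc1).symm ⟨j, hjm⟩ with hp₁def
      have hp₁ : c₁ p₁ = j := congrArg Subtype.val
        (((iv n (l - k + 1) l).orderIsoOfFin hc1).apply_symm_apply ⟨j, hjm⟩)
      rw [RS_eval i j r₁ c₁ p₁ hp₁ (-1)
          (fun q => sgnneg _ _ (lt_of_lt_of_le (hr₁lt q) (by omega))),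
        CS_mem i j r₁ c₁ p₁ hp₁,
        RS_mem i j r₂ c₂ q₂ hq₂,
        CS_eval i j r₂ c₂ q₂ hq₂ (-1)
          (fun p => sgnneg _ _ (lt_of_lt_of_le (hc₂lt p) (by omega)))]
      simp only [neg_smul, one_smul, zero_add, add_zero]
      ring
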